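/- arXiv:1309.2701 — 6 statements merged into one kernel-verified Lean document; each statement's English description precedes it below -/
import Mathlib

section
/- For every integer N ≥ 1 and real ρ > 0, every eigenvalue λ ∈ ℂ of the matrix A(N,ρ) (i.e., every root of its characteristic polynomial) is a real number and is strictly negative. -/
open Matrix Polynomial Finset

/-- The tridiagonal matrix `A(N,ρ)` of the finite population processor sharing model. -/
noncomputable def matA (N : ℕ) (ρ : ℝ) : Matrix (Fin N) (Fin N) ℝ :=
  Matrix.of fun n m =>
    if (m : ℕ) = (n : ℕ) then -1 - ρ * ((N : ℝ) - (n : ℕ) - 1) / N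
    else if (m : ℕ) = (n : ℕ) + 1 then ρ * ((N : ℝ) - (n : ℕ) - 1) / N
    else if (m : ℕ) + 1 = (n : ℕ) then ((n : ℕ) : ℝ) / ((n : ℕ) + 1)
    else 0

/-- Symmetrizing weights for `matA`. -/
noncomputable def wgt (N : ℕ) (ρ : ℝ) : ℕ → ℝ
  | 0 => 1
  | k + 1 => wgt N ρ k * (ρ * ((N : ℝ) - k - 1) / N) * (((k : ℝ) + 2) / ((k : ℝ) + 1))

lemma wgt_pos (N : ℕ) (hN : 1 ≤ N) (ρ : ℝ) (hρ : 0 < ρ) :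
    ∀ k, k < N → 0 < wgt N ρ k := by
  intro k
  induction k with
  | zero => intro _; simp [wgt]
  | succ k ih =>
    intro hk
    have hk' : k < N := Nat.lt_of_succ_lt hk
    have hNr : (0:ℝ) < N := by exact_mod_cast Nat.lt_of_lt_of_le Nat.zero_lt_one hN
    have h1 : (0:ℝ) < (N : ℝ) - k - 1 := by
      have : ((k:ℝ) + 1) < N := by exact_mod_cast hk
      linarith
    have h2 : (0:ℝ) < ρ * ((N : ℝ) - k - 1) / N := by positivity
    have h3 : (0:ℝ) < ((k : ℝ) + 2) / ((k : ℝ) + 1) := by positivity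
    simpa [wgt] using mul_pos (mul_pos (ih hk') h2) h3

lemma matA_diag (N : ℕ) (ρ : ℝ) (n : Fin N) :
    matA N ρ n n = -1 - ρ * ((N : ℝ) - (n : ℕ) - 1) / N := by
  simp [matA]

lemma matA_symm (N : ℕ) (hN : 1 ≤ N) (ρ : ℝ) (hρ : 0 < ρ) (n m : Fin N) :
    wgt N ρ (n : ℕ) * matA N ρ n m = wgt N ρ (m : ℕ) * matA N ρ m n := by
  rcases Nat.lt_trichotomy (n : ℕ) (m : ℕ) with h | h | h
  · -- n < m
    by_cases h1 : (m : ℕ) = (n : ℕ) + 1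
    · have hAnm : matA N ρ n m = ρ * ((N : ℝ) - (n : ℕ) - 1) / N := by
        simp only [matA, Matrix.of_apply]
        rw [if_neg (by omega), if_pos h1]
      have hAmn : matA N ρ m n = ((n : ℕ) + 1 : ℝ) / ((n : ℕ) + 2) := by
        simp only [matA, Matrix.of_apply]
        rw [if_neg (by omega), if_neg (by omega), if_pos (by omega)]
        rw [h1]; push_cast; ring
      have hw : wgt N ρ (m : ℕ) = wgt N ρ (n : ℕ) *
          (ρ * ((N : ℝ) - (n : ℕ) - 1) / N) * (((n : ℕ) + 2 : ℝ) / ((n : ℕ) + 1)) := by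
        rw [h1]; rfl
      rw [hAnm, hAmn, hw]
      have hne1 : ((n : ℕ) : ℝ) + 1 ≠ 0 := by positivity
      have hne2 : ((n : ℕ) : ℝ) + 2 ≠ 0 := by positivity
      field_simp
    · have hAnm : matA N ρ n m = 0 := by
        simp only [matA, Matrix.of_apply]
        rw [if_neg (by omega), if_neg h1, if_neg (by omega)]
      have hAmn : matA N ρ m n = 0 := by
        simp only [matA, Matrix.of_apply]
        rw [if_neg (by omega), if_neg (by omega), if_neg (by omega)]
      rw [hAnm, hAmn]; ring
  · -- n = m
    have : n = m := Fin.ext h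
    rw [this]
  · -- m < n
    by_cases h1 : (n : ℕ) = (m : ℕ) + 1
    · have hAmn : matA N ρ m n = ρ * ((N : ℝ) - (m : ℕ) - 1) / N := by
        simp only [matA, Matrix.of_apply]
        rw [if_neg (by omega), if_pos h1]
      have hAnm : matA N ρ n m = ((m : ℕ) + 1 : ℝ) / ((m : ℕ) + 2) := by
        simp only [matA, Matrix.of_apply]
        rw [if_neg (by omega), if_neg (by omega), if_pos (by omega)]
        rw [h1]; push_cast; ring
      have hw : wgt N ρ (n : ℕ) = wgt N ρ (m : ℕ) *
          (ρ * ((N : ℝ) - (m : ℕ) - 1) / N) * (((m : ℕ) + 2 : ℝ) / ((m : ℕ) + 1)) := by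
        rw [h1]; rfl
      rw [hAnm, hAmn, hw]
      have hne1 : ((m : ℕ) : ℝ) + 1 ≠ 0 := by positivity
      have hne2 : ((m : ℕ) : ℝ) + 2 ≠ 0 := by positivity
      field_simp
    · have hAnm : matA N ρ n m = 0 := by
        simp only [matA, Matrix.of_apply]
        rw [if_neg (by omega), if_neg (by omega), if_neg (by omega)]
      have hAmn : matA N ρ m n = 0 := by
        simp only [matA, Matrix.of_apply]
        rw [if_neg (by omega), if_neg h1, if_neg (by omega)]
      rw [hAnm, hAmn]; ring

lemma matA_offdiag_nonneg (N : ℕ) (ρ : ℝ) (hρ : 0 ≤ ρ) (n m : Fin N) (h : m ≠ n) :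
    0 ≤ matA N ρ n m := by
  have hval : ((n : ℕ) : ℝ) + 1 ≤ (N : ℝ) := by exact_mod_cast n.isLt
  have hN0 : (0:ℝ) ≤ N := Nat.cast_nonneg N
  simp only [matA, Matrix.of_apply]
  split_ifs with h1 h2 h3
  · exact absurd (Fin.ext h1) h
  · apply div_nonneg (mul_nonneg hρ (by linarith)) hN0
  · positivity
  · exact le_refl 0

lemma matA_rowsum (N : ℕ) (hN : 1 ≤ N) (ρ : ℝ) (n : Fin N) :
    ∑ m, matA N ρ n m =
      (-1 - ρ * ((N : ℝ) - (n : ℕ) - 1) / N) + ρ * ((N : ℝ) - (n : ℕ) - 1) / N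
        + ((n : ℕ) : ℝ) / ((n : ℕ) + 1) := by
  have hsplit : ∀ m : Fin N, matA N ρ n m =
      (if (m : ℕ) = (n : ℕ) then (-1 - ρ * ((N : ℝ) - (n : ℕ) - 1) / N) else 0)
      + (if (m : ℕ) = (n : ℕ) + 1 then ρ * ((N : ℝ) - (n : ℕ) - 1) / N else 0)
      + (if (m : ℕ) + 1 = (n : ℕ) then ((n : ℕ) : ℝ) / ((n : ℕ) + 1) else 0) := by
    intro m
    simp only [matA, Matrix.of_apply]
    split_ifs <;> first | (exfalso; omega) | ring
  rw [Finset.sum_congr rfl (fun m _ => hsplit m), Finset.sum_add_distrib,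
    Finset.sum_add_distrib]
  congr 1
  · congr 1
    · -- diagonal sum
      have : ∀ m : Fin N, (if (m : ℕ) = (n : ℕ) then
          (-1 - ρ * ((N : ℝ) - (n : ℕ) - 1) / N) else 0) =
          (if m = n then (-1 - ρ * ((N : ℝ) - (n : ℕ) - 1) / N) else 0) := by
        intro m; congr 1; simp [Fin.ext_iff]
      rw [Finset.sum_congr rfl (fun m _ => this m)]
      simp
    · -- superdiagonal sum
      by_cases hn : (n : ℕ) + 1 < N
      · rw [Finset.sum_eq_single (⟨(n : ℕ) + 1, hn⟩ : Fin N)]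
        · simp
        · intro m _ hm
          rw [if_neg]
          intro hc
          exact hm (Fin.ext (by simpa using hc))
        · simp
      · have hnn : (n : ℕ) + 1 = N := by omega
        have hb : ρ * ((N : ℝ) - (n : ℕ) - 1) / N = 0 := by
          have : ((n : ℕ) : ℝ) + 1 = (N : ℝ) := by exact_mod_cast hnn
          rw [show (N : ℝ) - (n : ℕ) - 1 = 0 by linarith]
          ring
        rw [hb, Finset.sum_eq_zero]
        intro m _
        rw [if_neg]
        have := m.isLt
        omega
  · -- subdiagonal sum
    by_cases hn : 0 < (n : ℕ)
    · rw [Finset.sum_eq_single (⟨(n : ℕ) - 1, by omega⟩ : Fin N)]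
      · rw [if_pos (by simp; omega)]
      · intro m _ hm
        rw [if_neg]
        intro hc
        exact hm (Fin.ext (by simp; omega))
      · simp
    · have hn0 : (n : ℕ) = 0 := by omega
      rw [Finset.sum_eq_zero, hn0]
      · simp
      · intro m _
        rw [if_neg]
        omega

/-- Every (complex) eigenvalue of `A(N,ρ)` is real and strictly negative. -/
theorem stmt2 (N : ℕ) (hN : 1 ≤ N) (ρ : ℝ) (hρ : 0 < ρ) (lam : ℂ)
    (hlam : (((matA N ρ).map Complex.ofReal).charpoly).IsRoot lam) :
    lam.im = 0 ∧ lam.re < 0 := by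
  classical
  set A := matA N ρ with hA
  set Mc := A.map Complex.ofReal with hMc
  -- eigenvector
  have hdet : (lam • (1 : Matrix (Fin N) (Fin N) ℂ) - Mc).det = 0 := by
    have := hlam
    rw [Polynomial.IsRoot, Matrix.charpoly, eval_det, matPolyEquiv_charmatrix] at this
    simpa [Matrix.scalar, smul_eq_diagonal_mul, Pi.algebraMap_def] using this
  obtain ⟨v, hv0, hv⟩ := (Matrix.exists_mulVec_eq_zero_iff).mpr hdet
  have heig : ∀ i, ∑ j, Mc i j * v j = lam * v i := by
    intro i
    have := congrFun hv i
    simp [Matrix.mulVec, dotProduct, Matrix.sub_apply, Matrix.smul_apply, one_apply,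
      sub_mul, Finset.sum_sub_distrib, ite_mul, Finset.sum_ite_eq] at this
    linear_combination -this
  have hMcApply : ∀ i j, Mc i j = ((A i j : ℝ) : ℂ) := fun i j => rfl
  -- weights
  set w : Fin N → ℝ := fun k => wgt N ρ (k : ℕ) with hwdef
  have hw : ∀ k : Fin N, 0 < w k := fun k => wgt_pos N hN ρ hρ (k : ℕ) k.isLt
  have hsym : ∀ a b : Fin N, w a * A a b = w b * A b a :=
    fun a b => matA_symm N hN ρ hρ a b
  -- the real number s
  set s : ℝ := ∑ k, w k * Complex.normSq (v k) with hsdef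
  have hs : 0 < s := by
    obtain ⟨k0, hk0⟩ := Function.ne_iff.mp hv0
    refine Finset.sum_pos' (fun k _ => ?_) ⟨k0, Finset.mem_univ k0, ?_⟩
    · exact mul_nonneg (hw k).le (Complex.normSq_nonneg _)
    · exact mul_pos (hw k0) (Complex.normSq_pos.mpr hk0)
  -- the quadratic form
  set Q : ℂ := ∑ a, ∑ b, ((w a * A a b : ℝ) : ℂ) * ((starRingEnd ℂ) (v a) * v b) with hQdef
  have hQ1 : Q = lam * (s : ℂ) := by
    have hrow : ∀ a : Fin N,
        (∑ b, ((w a * A a b : ℝ) : ℂ) * ((starRingEnd ℂ) (v a) * v b))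
          = ((w a : ℝ) : ℂ) * (starRingEnd ℂ) (v a) * (lam * v a) := by
      intro a
      rw [← heig a, Finset.mul_sum]
      refine Finset.sum_congr rfl fun b _ => ?_
      rw [hMcApply a b]
      push_cast
      ring
    rw [hQdef, Finset.sum_congr rfl (fun a _ => hrow a), hsdef]
    push_cast
    rw [Finset.mul_sum]
    refine Finset.sum_congr rfl fun a _ => ?_
    rw [Complex.normSq_eq_conj_mul_self]
    ring
  have hQreal : (starRingEnd ℂ) Q = Q := by
    rw [hQdef, map_sum]
    have : ∀ a : Fin N, (starRingEnd ℂ)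
        (∑ b, ((w a * A a b : ℝ) : ℂ) * ((starRingEnd ℂ) (v a) * v b))
        = ∑ b, ((w a * A a b : ℝ) : ℂ) * (v a * (starRingEnd ℂ) (v b)) := by
      intro a
      rw [map_sum]
      refine Finset.sum_congr rfl fun b _ => ?_
      rw [_root_.map_mul, _root_.map_mul, Complex.conj_ofReal, Complex.conj_conj]
    rw [Finset.sum_congr rfl (fun a _ => this a), Finset.sum_comm]
    refine Finset.sum_congr rfl fun a _ => Finset.sum_congr rfl fun b _ => ?_
    rw [show w b * A b a = w a * A a b from hsym b a]
    ring
  -- reality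
  have him : lam.im = 0 := by
    have h1 : (starRingEnd ℂ) (lam * (s : ℂ)) = lam * (s : ℂ) := by
      rw [← hQ1, hQreal]
    rw [_root_.map_mul, Complex.conj_ofReal] at h1
    have hsne : ((s : ℝ) : ℂ) ≠ 0 := by exact_mod_cast hs.ne'
    have : (starRingEnd ℂ) lam = lam := mul_right_cancel₀ hsne h1
    exact Complex.conj_eq_iff_im.mp this
  -- negativity via Gershgorin at a maximizing index
  obtain ⟨n, -, hmax⟩ := Finset.exists_max_image (Finset.univ : Finset (Fin N))
    (fun m => ‖v m‖) ⟨⟨0, hN⟩, Finset.mem_univ _⟩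
  have hvn : v n ≠ 0 := by
    intro h0
    apply hv0
    funext m
    have := hmax m (Finset.mem_univ m)
    rw [h0] at this
    simp only [norm_zero] at this
    exact norm_eq_zero.mp (le_antisymm this (norm_nonneg _))
  have habs : 0 < ‖v n‖ := norm_pos_iff.mpr hvn
  have heq : (lam - ((A n n : ℝ) : ℂ)) * v n
      = ∑ m ∈ Finset.univ.erase n, ((A n m : ℝ) : ℂ) * v m := by
    have h := heig n
    rw [← Finset.add_sum_erase _ _ (Finset.mem_univ n)] at h
    rw [hMcApply n n] at h
    have h2 : ∀ m ∈ Finset.univ.erase n, Mc n m * v m = ((A n m : ℝ) : ℂ) * v m :=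
      fun m _ => by rw [hMcApply]
    rw [Finset.sum_congr rfl h2] at h
    linear_combination -h
  have hub : ‖lam - ((A n n : ℝ) : ℂ)‖ * ‖v n‖
      ≤ (∑ m ∈ Finset.univ.erase n, A n m) * ‖v n‖ := by
    rw [← norm_mul, heq]
    calc ‖∑ m ∈ Finset.univ.erase n, ((A n m : ℝ) : ℂ) * v m‖
        ≤ ∑ m ∈ Finset.univ.erase n, ‖((A n m : ℝ) : ℂ) * v m‖ :=
          norm_sum_le _ _
      _ ≤ ∑ m ∈ Finset.univ.erase n, A n m * ‖v n‖ := by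
          refine Finset.sum_le_sum fun m hm => ?_
          have hmn : m ≠ n := Finset.ne_of_mem_erase hm
          have hnn : 0 ≤ A n m := matA_offdiag_nonneg N ρ hρ.le n m hmn
          rw [norm_mul, Complex.norm_real, Real.norm_eq_abs, abs_of_nonneg hnn]
          exact mul_le_mul_of_nonneg_left (hmax m (Finset.mem_univ m)) hnn
      _ = (∑ m ∈ Finset.univ.erase n, A n m) * ‖v n‖ := by
          rw [Finset.sum_mul]
  have h2 : ‖lam - ((A n n : ℝ) : ℂ)‖ ≤ ∑ m ∈ Finset.univ.erase n, A n m :=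
    le_of_mul_le_mul_right hub habs
  have herase : ∑ m ∈ Finset.univ.erase n, A n m
      = ρ * ((N : ℝ) - (n : ℕ) - 1) / N + ((n : ℕ) : ℝ) / ((n : ℕ) + 1) := by
    have h3 := matA_rowsum N hN ρ n
    rw [← Finset.add_sum_erase _ _ (Finset.mem_univ n), matA_diag] at h3
    linarith
  have hre : lam.re - A n n ≤ ‖lam - ((A n n : ℝ) : ℂ)‖ := by
    have := Complex.re_le_norm (lam - ((A n n : ℝ) : ℂ))
    simpa using this
  have hc : ((n : ℕ) : ℝ) / ((n : ℕ) + 1) < 1 := by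
    rw [div_lt_one (by positivity)]
    linarith [Nat.cast_nonneg (α := ℝ) (n : ℕ)]
  have hdn : A n n = -1 - ρ * ((N : ℝ) - (n : ℕ) - 1) / N := matA_diag N ρ n
  refine ⟨him, ?_⟩
  rw [herase] at h2
  rw [hdn] at hre h2
  linarith
end

section
/- Let A(γ) denote, for each real γ, the unique positive real solution of γ − A + 2/A² = 0. Then A(γ) − γ − 2/γ² = O(γ^{−5}) as γ → +∞, and A(γ) − √(−2/γ) + 1/γ² = O(|γ|^{−7/2}) as γ → −∞. -/
open Filter Asymptotics

set_option maxHeartbeats 1000000 in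
lemma aux2_stmt9 (a s t w : ℝ) (ha : 0 < a) (hs0 : 0 < s) (ht4 : 4 ≤ t)
    (hw2 : w^2 = t) (hw : 2 ≤ w) (hs2 : s^2*t = 2) (hA3 : a^3 + t*a^2 = 2) :
    |a - s + 1/t^2| * (t^3*w) ≤ 100 := by
  have ht0 : (0:ℝ) < t := by linarith
  have hw0 : (0:ℝ) < w := by linarith
  have hs1 : s ≤ 1 := by nlinarith
  have hsw : 1 ≤ s*w := by nlinarith [mul_pos hs0 hw0]
  have hAs : a < s := by nlinarith [pow_pos ha 3, mul_pos ht0 (add_pos ha hs0)]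
  have hδ : (a - s) * (t * (a + s)) = -a^3 := by linear_combination hA3 - hs2
  have hlb : (s - a) * t^2 ≤ 2 := by
    have h1 : a^3 ≤ s^2*(a+s) := by nlinarith
    have h2 : (s-a)*t ≤ s^2 := by
      have h3 : ((s-a)*t - s^2) * (a+s) ≤ 0 := by
        have h3' : ((s-a)*t - s^2) * (a+s) = a^3 - s^2*(a+s) := by linear_combination -hδ
        linarith [h1, h3'.le, h3'.ge]
      nlinarith [mul_pos ha hs0, add_pos ha hs0]
    nlinarith
  have hd0 : 0 ≤ s - a := by linarith
  have h_sq : ((s-a)*t^2)^2 ≤ 4 := by nlinarith [mul_nonneg hd0 (sq_nonneg t)]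
  have h_cube : ((s-a)*t^2)^3 ≤ 8 := by nlinarith [mul_nonneg hd0 (sq_nonneg t), h_sq]
  have hNt : ((a+s) - t*a^3)*t^2
      = 5*((s-a)*t^2) - 3*t*s*(s-a)^2*t^2 + t*(s-a)^3*t^2 := by
    linear_combination ((2*s-3*a)*t^2) * hs2
  have e1 : 5*((s-a)*t^2) ≤ 10 := by linarith
  have e2 : 0 ≤ 3*t*s*(s-a)^2*t^2 := by positivity
  have e3 : t*(s-a)^3*t^2 ≤ 1 := by
    nlinarith [h_cube, pow_pos ht0 3, mul_nonneg (mul_nonneg hd0 hd0) hd0]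
  have e4 : 3*t*s*(s-a)^2*t^2 ≤ 14 := by
    nlinarith [h_sq, mul_nonneg hd0 hd0]
  have e0 : 0 ≤ 5*((s-a)*t^2) := by nlinarith
  have e5 : 0 ≤ t*(s-a)^3*t^2 := by positivity
  have hMup : ((a+s) - t*a^3)*t^2 ≤ 14 := by linarith
  have hMlo : -14 ≤ ((a+s) - t*a^3)*t^2 := by linarith
  have hw4 : ((a+s) - t*a^3)*w^4 = ((a+s) - t*a^3)*t^2 := by
    have : w^4 = t^2 := by nlinarith [hw2]
    rw [this]
  have hMw4u : ((a+s) - t*a^3)*w^4 ≤ 14 := by rw [hw4]; exact hMup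
  have hMw4l : -14 ≤ ((a+s) - t*a^3)*w^4 := by rw [hw4]; exact hMlo
  have hup3 : ((a+s) - t*a^3)*w^3 ≤ 100*(a+s) := by
    nlinarith [hMw4u, hsw, hw0, mul_pos ha hw0]
  have hlo3 : -(100*(a+s)) ≤ ((a+s) - t*a^3)*w^3 := by
    nlinarith [hMw4l, hsw, hw0, mul_pos ha hw0]
  have hDN : (a - s + 1/t^2) * (t^2*(a+s)) = (a+s) - t*a^3 := by
    field_simp
    linear_combination (t : ℝ) * hδ
  have h7 : (a - s + 1/t^2) * (t^3*w) * (a+s) = ((a+s) - t*a^3) * w^3 := by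
    calc (a - s + 1/t^2) * (t^3*w) * (a+s)
        = ((a - s + 1/t^2) * (t^2*(a+s))) * (t*w) := by ring
      _ = ((a+s) - t*a^3) * (t*w) := by rw [hDN]
      _ = ((a+s) - t*a^3) * w^3 := by rw [← hw2]; ring
  have has0 : 0 < a + s := by linarith
  have hDup : (a - s + 1/t^2) * (t^3*w) ≤ 100 := by nlinarith [h7, hup3, has0]
  have hDlo : -100 ≤ (a - s + 1/t^2) * (t^3*w) := by nlinarith [h7, hlo3, has0]
  rw [← abs_of_pos (show (0:ℝ) < t^3*w by positivity), ← abs_mul]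
  rw [abs_le]; exact ⟨hDlo, hDup⟩

set_option maxHeartbeats 1000000 in
/-- Asymptotics of the positive root `A(γ)` of `γ − A + 2/A² = 0`:
`A(γ) = γ + 2/γ² + O(γ^{−5})` as `γ → +∞`, and
`A(γ) = √(−2/γ) − 1/γ² + O(|γ|^{−7/2})` as `γ → −∞`. -/
theorem stmt9 (A : ℝ → ℝ) (hA : ∀ γ : ℝ, 0 < A γ ∧ γ - A γ + 2 / (A γ) ^ 2 = 0) :
    ((fun γ : ℝ => A γ - γ - 2 / γ ^ 2) =O[atTop] fun γ : ℝ => 1 / γ ^ 5) ∧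
    ((fun γ : ℝ => A γ - Real.sqrt (-2 / γ) + 1 / γ ^ 2) =O[atBot]
      fun γ : ℝ => |γ| ^ (-(7 : ℝ) / 2)) := by
  constructor
  · rw [Asymptotics.isBigO_iff]
    refine ⟨12, ?_⟩
    filter_upwards [eventually_ge_atTop (2:ℝ)] with γ hγ
    obtain ⟨ha, heq⟩ := hA γ
    set a := A γ with hadef
    have hγ0 : (0:ℝ) < γ := by linarith
    have ha2 : (0:ℝ) < a^2 := by positivity
    have h2 : (a - γ) * a^2 = 2 := by
      field_simp at heq
      linarith
    have hga : γ < a := by nlinarith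
    have hup : (a - γ) * γ^2 ≤ 2 := by nlinarith
    have h2a : a - γ = 2/a^2 := by
      have : 2/a^2 = a - γ := by
        field_simp
        linarith [h2]
      linarith
    rw [Real.norm_eq_abs, Real.norm_eq_abs, abs_of_pos (show (0:ℝ) < 1/γ^5 by positivity)]
    rw [abs_le]
    constructor
    · have hfinal : 2/γ^2 - 2/a^2 ≤ 12/γ^5 := by
        rw [div_sub_div _ _ (by positivity) (by positivity),
          div_le_div_iff₀ (by positivity) (by positivity)]
        have h5 : (a + γ)*γ ≤ 2*a^2 := by nlinarith
        have h6 : (a-γ)*γ^2 * ((a+γ)*γ) ≤ 2 * (2*a^2) :=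
          mul_le_mul hup h5 (by nlinarith) (by norm_num)
        nlinarith [mul_le_mul_of_nonneg_left h6 (show (0:ℝ) ≤ 2*γ^2 by positivity),
          mul_pos (mul_pos hγ0 hγ0) (mul_pos ha ha)]
      have h125 : 12/γ^5 = 12 * (1/γ^5) := by ring
      linarith [h2a, hfinal]
    · have hle : 2/a^2 ≤ 2/γ^2 := by
        have h9 : γ^2 ≤ a^2 := by nlinarith
        gcongr
      have : (0:ℝ) ≤ 12 * (1/γ^5) := by positivity
      linarith [h2a, hle]
  · rw [Asymptotics.isBigO_iff]
    refine ⟨100, ?_⟩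
    filter_upwards [eventually_le_atBot (-4:ℝ)] with γ hγ
    obtain ⟨ha, heq⟩ := hA γ
    set a := A γ with hadef
    set t : ℝ := -γ with htdef
    have hγt : γ = -t := by rw [htdef]; ring
    have ht4 : (4:ℝ) ≤ t := by rw [htdef]; linarith
    have ht0 : (0:ℝ) < t := by linarith
    have hst : -2/γ = 2/t := by rw [hγt]; ring_nf
    set s : ℝ := Real.sqrt (-2/γ) with hsdef
    have hs0 : 0 < s := by
      rw [hsdef, hst]; exact Real.sqrt_pos.2 (by positivity)
    have hs2 : s^2 * t = 2 := by
      have h1 : s^2 = 2/t := by rw [hsdef, hst]; exact Real.sq_sqrt (by positivity)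
      rw [h1]; field_simp
    set w : ℝ := Real.sqrt t with hwdef
    have hw0 : 0 < w := Real.sqrt_pos.2 ht0
    have hw2 : w^2 = t := Real.sq_sqrt ht0.le
    have hw : 2 ≤ w := by nlinarith
    have hA3 : a^3 + t*a^2 = 2 := by
      rw [hγt] at heq
      field_simp at heq
      linarith
    have habs := aux2_stmt9 a s t w ha hs0 ht4 hw2 hw hs2 hA3
    have habsγ : |γ| = t := by rw [hγt, abs_neg, abs_of_pos ht0]
    have hrpow : |γ| ^ (-(7:ℝ)/2) = 1/(t^3*w) := by
      rw [habsγ]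
      have h1 : (-(7:ℝ)/2) = -(7/2 : ℝ) := by norm_num
      rw [h1, Real.rpow_neg ht0.le]
      have h2 : ((7:ℝ)/2) = (3:ℝ) + 1/2 := by norm_num
      rw [h2, Real.rpow_add ht0]
      have h3 : t ^ (3:ℝ) = t^(3:ℕ) := by
        rw [← Real.rpow_natCast t 3]; norm_num
      have h4 : t ^ ((1:ℝ)/2) = w := by
        rw [hwdef, Real.sqrt_eq_rpow]
      rw [h3, h4, one_div]
    have hγ2 : 1/γ^2 = 1/t^2 := by rw [hγt]; ring_nf
    rw [Real.norm_eq_abs, Real.norm_eq_abs, hγ2, hrpow,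
      abs_of_pos (show (0:ℝ) < 1/(t^3*w) by positivity)]
    have hrw : (100:ℝ) * (1/(t^3*w)) = 100/(t^3*w) := by ring
    rw [hrw, le_div_iff₀ (by positivity : (0:ℝ) < t^3*w)]
    exact habs
end

section
/- Let A(γ) denote, for each real γ, the unique positive real solution of γ − A + 2/A² = 0, and set f(γ) = 1/A(γ) + 1/A(γ)⁴. Then γ·f(γ) → 1 as γ → +∞, and 4f(γ)/γ² → 1 as γ → −∞; i.e., f(γ) ∼ 1/γ as γ → +∞ and f(γ) ∼ γ²/4 as γ → −∞. -/
open Filter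

/-- With `A(γ)` the positive root of `γ − A + 2/A² = 0` and `f(γ) = 1/A(γ) + 1/A(γ)⁴`:
`f(γ) ∼ 1/γ` as `γ → +∞` and `f(γ) ∼ γ²/4` as `γ → −∞`. -/
theorem stmt10 (A : ℝ → ℝ) (hA : ∀ γ : ℝ, 0 < A γ ∧ γ - A γ + 2 / (A γ) ^ 2 = 0) :
    Tendsto (fun γ : ℝ => γ * (1 / A γ + 1 / (A γ) ^ 4)) atTop (nhds 1) ∧
    Tendsto (fun γ : ℝ => 4 * (1 / A γ + 1 / (A γ) ^ 4) / γ ^ 2) atBot (nhds 1) := by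
  have key : ∀ γ : ℝ, 0 < A γ ∧ γ * (A γ) ^ 2 - (A γ) ^ 3 + 2 = 0 := by
    intro γ
    obtain ⟨h1, h2⟩ := hA γ
    refine ⟨h1, ?_⟩
    have hne : (A γ) ^ 2 ≠ 0 := by positivity
    field_simp at h2
    linarith
  have hgt : ∀ γ : ℝ, γ < A γ := by
    intro γ
    obtain ⟨h1, h2⟩ := key γ
    nlinarith [sq_nonneg (A γ), mul_pos h1 h1]
  constructor
  · -- atTop
    have h1 : Tendsto (fun γ : ℝ => γ / A γ) atTop (nhds 1) := by
      have hlow : Tendsto (fun γ : ℝ => γ / (γ + 2)) atTop (nhds 1) := by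
        have : Tendsto (fun γ : ℝ => 1 - 2 / (γ + 2)) atTop (nhds (1 - 0)) :=
          tendsto_const_nhds.sub
            (tendsto_const_nhds.div_atTop (tendsto_atTop_add_const_right _ 2 tendsto_id))
        rw [sub_zero] at this
        refine this.congr' ?_
        filter_upwards [eventually_gt_atTop (0:ℝ)] with γ hγ
        field_simp
        ring
      refine tendsto_of_tendsto_of_tendsto_of_le_of_le' hlow tendsto_const_nhds ?_ ?_
      · filter_upwards [eventually_ge_atTop (1:ℝ)] with γ hγ
        obtain ⟨ha, hp⟩ := key γ
        have haγ := hgt γ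
        have hle : A γ ≤ γ + 2 := by nlinarith
        gcongr
      · filter_upwards [eventually_ge_atTop (1:ℝ)] with γ hγ
        obtain ⟨ha, hp⟩ := key γ
        exact div_le_one_of_le₀ (le_of_lt (hgt γ)) (le_of_lt ha)
    have h2 : Tendsto (fun γ : ℝ => γ / (A γ) ^ 4) atTop (nhds 0) := by
      have hup : Tendsto (fun γ : ℝ => 1 / γ ^ 3) atTop (nhds 0) :=
        tendsto_const_nhds.div_atTop (tendsto_pow_atTop (by norm_num))
      refine tendsto_of_tendsto_of_tendsto_of_le_of_le' tendsto_const_nhds hup ?_ ?_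
      · filter_upwards [eventually_ge_atTop (1:ℝ)] with γ hγ
        obtain ⟨ha, hp⟩ := key γ
        positivity
      · filter_upwards [eventually_ge_atTop (1:ℝ)] with γ hγ
        obtain ⟨ha, hp⟩ := key γ
        have haγ := hgt γ
        have h4 : γ ^ 4 ≤ (A γ) ^ 4 :=
          pow_le_pow_left₀ (by linarith) (le_of_lt haγ) 4
        calc γ / (A γ) ^ 4 ≤ γ / γ ^ 4 := by gcongr
          _ = 1 / γ ^ 3 := by field_simp
    have := h1.add h2
    rw [add_zero] at this
    refine this.congr ?_
    intro γ
    ring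
  · -- atBot
    have hsmall : ∀ γ : ℝ, γ ≤ -2 → A γ ≤ 1 := by
      intro γ hγ
      obtain ⟨ha, hp⟩ := key γ
      by_contra h
      push_neg at h
      nlinarith
    have hg : Tendsto (fun γ : ℝ => A γ / γ) atBot (nhds 0) := by
      have hlow : Tendsto (fun γ : ℝ => 1 / γ) atBot (nhds 0) := by
        have h1 : Tendsto (fun γ : ℝ => -γ) atBot atTop := tendsto_neg_atBot_atTop
        have h2 : Tendsto (fun r : ℝ => r⁻¹) atTop (nhds 0) := tendsto_inv_atTop_zero
        have h := (h2.comp h1).neg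
        rw [neg_zero] at h
        refine h.congr fun γ => ?_
        simp only [Function.comp, one_div, inv_neg, neg_neg]
      refine tendsto_of_tendsto_of_tendsto_of_le_of_le' hlow tendsto_const_nhds ?_ ?_
      · filter_upwards [eventually_le_atBot (-2:ℝ)] with γ hγ
        obtain ⟨ha, hp⟩ := key γ
        have h1 := hsmall γ hγ
        have hγ0 : γ < 0 := by linarith
        exact (div_le_div_right_of_neg hγ0).mpr h1
      · filter_upwards [eventually_le_atBot (-2:ℝ)] with γ hγ
        obtain ⟨ha, hp⟩ := key γ
        have hγ0 : γ < 0 := by linarith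
        exact div_nonpos_of_nonneg_of_nonpos (le_of_lt ha) (le_of_lt hγ0)
    have hlim : Tendsto (fun γ : ℝ => 2 * (A γ / γ) * (A γ / γ - 1) + (A γ / γ - 1) ^ 2)
        atBot (nhds (2 * 0 * (0 - 1) + (0 - 1) ^ 2)) :=
      ((tendsto_const_nhds.mul hg).mul (hg.sub tendsto_const_nhds)).add
        ((hg.sub tendsto_const_nhds).pow 2)
    norm_num at hlim
    refine hlim.congr' ?_
    filter_upwards [eventually_lt_atBot (0:ℝ)] with γ hγ
    obtain ⟨ha, hp⟩ := key γ
    have hane : A γ ≠ 0 := ne_of_gt ha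
    have hγne : γ ≠ 0 := ne_of_lt hγ
    have h2 : (A γ) ^ 2 * (A γ - γ) = 2 := by linear_combination -hp
    have e1 : 1 / A γ = A γ * (A γ - γ) / 2 := by
      rw [div_eq_div_iff hane (by norm_num)]
      linear_combination -h2
    have e4 : 1 / (A γ) ^ 4 = (A γ - γ) ^ 2 / 4 := by
      rw [div_eq_div_iff (by positivity) (by norm_num)]
      linear_combination -((A γ) ^ 2 * (A γ - γ) + 2) * h2
    rw [e1, e4]
    field_simp
    ring
end

section
/- Let j ≥ 0 be an integer and α, β real numbers. Set Φ₀(z) = e^{−z²/4} He_j(z), and define Φ₁(z) = (2β/3)(z² + 8j + 4) Φ₀′(z) + (α/2 − 2β/3) z Φ₀(z). Then Φ₁″(z) + (j + 1/2 − z²/4) Φ₁(z) = α Φ₀′(z) + β z³ Φ₀(z) for all real z; i.e., Φ₁ is a particular solution of the inhomogeneous parabolic-cylinder equation with right-hand side α Φ₀′ + β z³ Φ₀. -/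
open Polynomial

lemma derivative_hermite_succ (n : ℕ) :
    derivative (hermite (n + 1)) = C ((n : ℤ) + 1) * hermite n := by
  induction n with
  | zero => simp [hermite_one, hermite_zero]
  | succ n ih =>
    have h : derivative (hermite (n + 1 + 1))
        = hermite (n + 1) + X * derivative (hermite (n + 1))
          - derivative (derivative (hermite (n + 1))) := by
      rw [hermite_succ (n + 1), derivative_sub, derivative_mul, derivative_X]
      ring
    rw [h, ih, derivative_mul, derivative_C, hermite_succ n]
    push_cast
    simp only [C_add, C_1]
    ring

lemma hermite_ode (j : ℕ) :
    derivative (derivative (hermite j)) =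
      X * derivative (hermite j) - C (j : ℤ) * hermite j := by
  have h1 : derivative (hermite j) = X * hermite j - hermite (j + 1) := by
    rw [hermite_succ]; ring
  rw [h1, derivative_sub, derivative_mul, derivative_X, derivative_hermite_succ j, h1]
  simp only [C_add, C_1]
  ring

private lemma key (Q : Polynomial ℝ) (x : ℝ) :
    HasDerivAt (fun u : ℝ => Real.exp (-u ^ 2 / 4) * Q.eval u)
      (Real.exp (-x ^ 2 / 4) * ((derivative Q).eval x - x / 2 * Q.eval x)) x := by
  have h1 : HasDerivAt (fun u : ℝ => -u ^ 2 / 4) (-x / 2) x := by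
    have := ((hasDerivAt_pow 2 x).neg).div_const 4
    refine this.congr_deriv ?_
    push_cast
    ring
  have := h1.exp.mul (Q.hasDerivAt x)
  refine this.congr_deriv ?_
  ring

/-- Evaluation of the `j`-th probabilists' Hermite polynomial at a real argument. -/
noncomputable def He (j : ℕ) (z : ℝ) : ℝ := Polynomial.aeval z (Polynomial.hermite j)

/-- With `Φ₀(z) = e^{−z²/4} He_j(z)`, the function
`Φ₁(z) = (2β/3)(z² + 8j + 4) Φ₀′(z) + (α/2 − 2β/3) z Φ₀(z)` is a particular solution of
`Φ₁″ + (j + 1/2 − z²/4) Φ₁ = α Φ₀′ + β z³ Φ₀`. -/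
theorem stmt12 (j : ℕ) (α β : ℝ) :
    ∀ z : ℝ,
      deriv (deriv fun w : ℝ =>
          (2 * β / 3) * (w ^ 2 + 8 * (j : ℝ) + 4)
              * deriv (fun u : ℝ => Real.exp (-u ^ 2 / 4) * He j u) w
            + (α / 2 - 2 * β / 3) * w * (Real.exp (-w ^ 2 / 4) * He j w)) z
        + ((j : ℝ) + 1 / 2 - z ^ 2 / 4)
            * ((2 * β / 3) * (z ^ 2 + 8 * (j : ℝ) + 4)
                * deriv (fun u : ℝ => Real.exp (-u ^ 2 / 4) * He j u) z
              + (α / 2 - 2 * β / 3) * z * (Real.exp (-z ^ 2 / 4) * He j z))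
      = α * deriv (fun u : ℝ => Real.exp (-u ^ 2 / 4) * He j u) z
          + β * z ^ 3 * (Real.exp (-z ^ 2 / 4) * He j z) := by
  intro z
  set P : Polynomial ℝ := (hermite j).map (algebraMap ℤ ℝ) with hP
  have hHe : ∀ u : ℝ, He j u = P.eval u := by
    intro u
    simp [He, hP, aeval_def, eval_map]
  have hODE : derivative (derivative P) = X * derivative P - C (j : ℝ) * P := by
    have := congrArg (Polynomial.map (algebraMap ℤ ℝ)) (hermite_ode j)
    simpa [Polynomial.derivative_map, Polynomial.map_mul, Polynomial.map_sub, hP] using this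
  set R0 : Polynomial ℝ := derivative P - C (1/2 : ℝ) * X * P with hR0
  have hg : (deriv fun u : ℝ => Real.exp (-u ^ 2 / 4) * He j u) =
      fun x : ℝ => Real.exp (-x ^ 2 / 4) * R0.eval x := by
    funext x
    have he : (fun u : ℝ => Real.exp (-u ^ 2 / 4) * He j u)
        = fun u : ℝ => Real.exp (-u ^ 2 / 4) * P.eval u := by
      funext u; rw [hHe]
    rw [he, (key P x).deriv, hR0]
    simp only [eval_sub, eval_mul, eval_C, eval_X]
    ring
  set Q : Polynomial ℝ := C (2 * β / 3) * (X * X + C (8 * (j : ℝ) + 4)) * R0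
      + C (α / 2 - 2 * β / 3) * X * P with hQ
  have hF : (fun w : ℝ =>
          (2 * β / 3) * (w ^ 2 + 8 * (j : ℝ) + 4)
              * deriv (fun u : ℝ => Real.exp (-u ^ 2 / 4) * He j u) w
            + (α / 2 - 2 * β / 3) * w * (Real.exp (-w ^ 2 / 4) * He j w))
      = fun w : ℝ => Real.exp (-w ^ 2 / 4) * Q.eval w := by
    funext w
    rw [hg, hHe, hQ]
    simp only [eval_add, eval_sub, eval_mul, eval_C, eval_X]
    ring
  set S : Polynomial ℝ := derivative Q - C (1/2 : ℝ) * X * Q with hS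
  have hF1 : (deriv fun w : ℝ => Real.exp (-w ^ 2 / 4) * Q.eval w)
      = fun x : ℝ => Real.exp (-x ^ 2 / 4) * S.eval x := by
    funext x
    rw [(key Q x).deriv, hS]
    simp only [eval_sub, eval_mul, eval_C, eval_X]
    ring
  set T : Polynomial ℝ := derivative S - C (1/2 : ℝ) * X * S with hT
  have hF2 : deriv (fun x : ℝ => Real.exp (-x ^ 2 / 4) * S.eval x) z
      = Real.exp (-z ^ 2 / 4) * T.eval z := by
    rw [(key S z).deriv, hT]
    simp only [eval_sub, eval_mul, eval_C, eval_X]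
    ring
  rw [hF, hF1, hF2, hg, hHe]
  have hb2 : (derivative (derivative P)).eval z
      = z * (derivative P).eval z - (j : ℝ) * P.eval z := by
    rw [hODE]; simp only [eval_sub, eval_mul, eval_C, eval_X]
  have hb3 : (derivative (derivative (derivative P))).eval z
      = (derivative P).eval z
        + z * (z * (derivative P).eval z - (j : ℝ) * P.eval z)
        - (j : ℝ) * (derivative P).eval z := by
    rw [congrArg derivative hODE]
    simp only [derivative_sub, derivative_mul, derivative_C, derivative_X,
      eval_sub, eval_add, eval_mul, eval_C, eval_X, eval_one, one_mul, zero_mul,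
      sub_zero, eval_zero, add_zero, neg_zero, hb2]
    ring
  simp only [hT, hS, hQ, hR0, derivative_add, derivative_sub, derivative_mul,
    derivative_C, derivative_X, eval_add, eval_sub, eval_mul, eval_C, eval_X,
    eval_one, eval_zero, zero_mul, mul_zero, one_mul, mul_one, add_zero, zero_add,
    sub_zero, zero_sub]
  rw [hb3, hb2]
  ring
end

section
/- Let G(z) = (1−z)^{−1} exp(1/(1−z)) for real z < 1, and let a_n = (d^n/dz^n G)(0) / n! denote its Taylor coefficients at 0 (G is real-analytic at 0). Then a₁ = 2a₀ and, for every integer n ≥ 1, (n+1) a_{n+1} − 2(n+1) a_n + n a_{n−1} = 0; equivalently the sequence ψ(n) = a_n satisfies ψ(n+1) + (n/(n+1)) ψ(n−1) − 2ψ(n) = 0. -/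
/-- The generating function `G(z) = (1−z)^{−1} exp(1/(1−z))`. -/
noncomputable def genG (z : ℝ) : ℝ := (1 - z)⁻¹ * Real.exp (1 / (1 - z))

lemma genG_contDiffOn : ContDiffOn ℝ ⊤ genG {z : ℝ | z ≠ 1} := by
  have h0 : ∀ x ∈ {z : ℝ | z ≠ 1}, (1 : ℝ) - x ≠ 0 := fun x hx =>
    sub_ne_zero.2 fun h => hx h.symm
  have h1 : ContDiffOn ℝ ⊤ (fun z : ℝ => (1 - z)⁻¹) {z : ℝ | z ≠ 1} :=
    ((contDiff_const.sub contDiff_id).contDiffOn).inv h0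
  have h2 : ContDiffOn ℝ ⊤ (fun z : ℝ => Real.exp (1 / (1 - z))) {z : ℝ | z ≠ 1} := by
    simp only [one_div]
    exact Real.contDiff_exp.comp_contDiffOn h1
  exact (h1.mul h2).congr (fun x hx => rfl)

lemma genG_iter_diff {n : ℕ} {x : ℝ} (hx : x ≠ 1) :
    DifferentiableAt ℝ (iteratedDeriv n genG) x := by
  have hs : IsOpen {z : ℝ | z ≠ 1} := isOpen_ne
  have hx' : x ∈ {z : ℝ | z ≠ 1} := hx
  have hmn : (n : WithTop ℕ∞) < (⊤ : WithTop ℕ∞) := by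
    exact_mod_cast WithTop.coe_lt_top (n : ℕ∞)
  have h := genG_contDiffOn.differentiableOn_iteratedDerivWithin
    (m := n) hmn hs.uniqueDiffOn
  have heq : Set.EqOn (iteratedDeriv n genG)
      (iteratedDerivWithin n genG {z : ℝ | z ≠ 1}) {z : ℝ | z ≠ 1} := fun y hy => by
    simp only [iteratedDerivWithin, iteratedDeriv, iteratedFDerivWithin_of_isOpen n hs hy]
  have := (h x hx').congr heq (heq hx')
  exact this.differentiableAt (hs.mem_nhds hx')

lemma genG_iter_hasDeriv (n : ℕ) {x : ℝ} (hx : x ≠ 1) :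
    HasDerivAt (iteratedDeriv n genG) (iteratedDeriv (n + 1) genG x) x := by
  rw [iteratedDeriv_succ]
  exact (genG_iter_diff hx).hasDerivAt

lemma one_sub_ne {x : ℝ} (hx : x ≠ 1) : (1 : ℝ) - x ≠ 0 :=
  sub_ne_zero.2 fun h => hx h.symm

lemma genG_hasDeriv {x : ℝ} (hx : x ≠ 1) :
    HasDerivAt genG (((1 - x) ^ 2)⁻¹ * ((2 - x) * genG x)) x := by
  have hne := one_sub_ne hx
  have h1 : HasDerivAt (fun z : ℝ => 1 - z) (-1) x := (hasDerivAt_id x).const_sub 1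
  have hu : HasDerivAt (fun z : ℝ => (1 - z)⁻¹) (((1 - x) ^ 2)⁻¹) x := by
    have : HasDerivAt (fun z : ℝ => (1 - z)⁻¹) (- -1 / (1 - x) ^ 2) x := h1.inv hne
    convert this using 1
    field_simp
  have hexp : HasDerivAt (fun z : ℝ => Real.exp ((1 - z)⁻¹))
      (Real.exp ((1 - x)⁻¹) * ((1 - x) ^ 2)⁻¹) x := hu.exp
  have hmul : HasDerivAt (fun z : ℝ => (1 - z)⁻¹ * Real.exp ((1 - z)⁻¹))
      (((1 - x) ^ 2)⁻¹ * Real.exp ((1 - x)⁻¹) + (1 - x)⁻¹ * (Real.exp ((1 - x)⁻¹) * ((1 - x) ^ 2)⁻¹)) x :=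
    hu.mul hexp
  have hfun : genG = fun z : ℝ => (1 - z)⁻¹ * Real.exp ((1 - z)⁻¹) := by
    funext z; simp [genG, one_div]
  rw [hfun]
  convert hmul using 1
  simp only [genG, one_div]
  field_simp
  ring

/-- The ODE `(1-x)^2 G' = (2-x) G`. -/
lemma genG_ode {x : ℝ} (hx : x ≠ 1) :
    (1 - x) ^ 2 * iteratedDeriv 1 genG x = (2 - x) * iteratedDeriv 0 genG x := by
  have hne := one_sub_ne hx
  rw [iteratedDeriv_one, iteratedDeriv_zero, (genG_hasDeriv hx).deriv]
  field_simp

lemma deriv_eq_on {f g : ℝ → ℝ} {x f' g' : ℝ} (hx : x ≠ 1)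
    (hf : HasDerivAt f f' x) (hg : HasDerivAt g g' x)
    (h : ∀ z : ℝ, z ≠ 1 → f z = g z) : f' = g' := by
  have hev : f =ᶠ[nhds x] g := by
    filter_upwards [isOpen_ne.mem_nhds hx] with z hz using h z hz
  exact hf.unique (hg.congr_of_eventuallyEq hev)

/-- Differentiating the ODE `n+1` times. -/
lemma genG_rec : ∀ n : ℕ, ∀ x : ℝ, x ≠ 1 →
    (1 - x) ^ 2 * iteratedDeriv (n + 2) genG x
      = (2 * ((n : ℝ) + 1) * (1 - x) + 2 - x) * iteratedDeriv (n + 1) genG x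
        - ((n : ℝ) + 1) ^ 2 * iteratedDeriv n genG x := by
  intro n
  induction n with
  | zero =>
    intro x hx
    have h1 : HasDerivAt (fun z : ℝ => 1 - z) (-1) x := (hasDerivAt_id x).const_sub 1
    have hf : HasDerivAt (fun z : ℝ => (1 - z) ^ 2 * iteratedDeriv 1 genG z)
        ((2 * (1 - x) ^ 1 * (-1)) * iteratedDeriv 1 genG x
          + (1 - x) ^ 2 * iteratedDeriv 2 genG x) x :=
      (h1.pow 2).mul (genG_iter_hasDeriv 1 hx)
    have hc : HasDerivAt (fun z : ℝ => 2 - z) (-1) x := (hasDerivAt_id x).const_sub 2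
    have hg : HasDerivAt (fun z : ℝ => (2 - z) * iteratedDeriv 0 genG z)
        ((-1) * iteratedDeriv 0 genG x + (2 - x) * iteratedDeriv 1 genG x) x :=
      hc.mul (genG_iter_hasDeriv 0 hx)
    have key := deriv_eq_on hx hf hg (fun z hz => genG_ode hz)
    push_cast
    linear_combination key
  | succ n ih =>
    intro x hx
    have h1 : HasDerivAt (fun z : ℝ => 1 - z) (-1) x := (hasDerivAt_id x).const_sub 1
    have hf : HasDerivAt (fun z : ℝ => (1 - z) ^ 2 * iteratedDeriv (n + 2) genG z)
        ((2 * (1 - x) ^ 1 * (-1)) * iteratedDeriv (n + 2) genG x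
          + (1 - x) ^ 2 * iteratedDeriv (n + 3) genG x) x :=
      (h1.pow 2).mul (genG_iter_hasDeriv (n + 2) hx)
    have hc : HasDerivAt (fun z : ℝ => 2 * ((n : ℝ) + 1) * (1 - z) + 2 - z)
        (2 * ((n : ℝ) + 1) * (-1) + 0 - 1) x := by
      exact (((h1.const_mul (2 * ((n : ℝ) + 1))).add (hasDerivAt_const x 2)).sub
        (hasDerivAt_id x))
    have hg : HasDerivAt (fun z : ℝ =>
        (2 * ((n : ℝ) + 1) * (1 - z) + 2 - z) * iteratedDeriv (n + 1) genG z
          - ((n : ℝ) + 1) ^ 2 * iteratedDeriv n genG z)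
        (((2 * ((n : ℝ) + 1) * (-1) + 0 - 1) * iteratedDeriv (n + 1) genG x
            + (2 * ((n : ℝ) + 1) * (1 - x) + 2 - x) * iteratedDeriv (n + 2) genG x)
          - ((n : ℝ) + 1) ^ 2 * iteratedDeriv (n + 1) genG x) x :=
      (hc.mul (genG_iter_hasDeriv (n + 1) hx)).sub
        ((genG_iter_hasDeriv n hx).const_mul (((n : ℝ) + 1) ^ 2))
    have key := deriv_eq_on hx hf hg (fun z hz => ih z hz)
    push_cast
    linear_combination key

/-- The Taylor coefficients `a_n = G^{(n)}(0)/n!` of `G(z) = (1−z)^{−1} e^{1/(1−z)}`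
satisfy `a₁ = 2a₀` and `(n+1)a_{n+1} − 2(n+1)a_n + n a_{n−1} = 0` for `n ≥ 1`;
i.e. `ψ(n) = a_n` solves `ψ(n+1) + (n/(n+1))ψ(n−1) − 2ψ(n) = 0`. -/
theorem stmt17 (a : ℕ → ℝ)
    (ha : ∀ n : ℕ, a n = iteratedDeriv n genG 0 / (n.factorial : ℝ)) :
    a 1 = 2 * a 0 ∧
    ∀ n : ℕ, 1 ≤ n →
      ((n : ℝ) + 1) * a (n + 1) - 2 * ((n : ℝ) + 1) * a n + (n : ℝ) * a (n - 1) = 0 := by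
  constructor
  · have h := genG_ode (x := 0) (by norm_num)
    rw [ha 1, ha 0]
    norm_num at h ⊢
    linarith
  · intro n hn
    obtain ⟨m, rfl⟩ : ∃ m, n = m + 1 := ⟨n - 1, (Nat.succ_pred_eq_of_pos hn).symm⟩
    have hrec := genG_rec m 0 (by norm_num)
    norm_num at hrec
    have hfac1 : (((m + 1).factorial : ℕ) : ℝ) = ((m : ℝ) + 1) * (m.factorial : ℝ) := by
      rw [Nat.factorial_succ]; push_cast; ring
    have hfac2 : (((m + 2).factorial : ℕ) : ℝ) = ((m : ℝ) + 2) * (((m + 1).factorial : ℕ) : ℝ) := by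
      rw [show m + 2 = (m + 1) + 1 from rfl, Nat.factorial_succ]; push_cast; ring
    have hm0 : (m.factorial : ℝ) ≠ 0 := Nat.cast_ne_zero.2 m.factorial_ne_zero
    have hm1 : ((m : ℝ) + 1) ≠ 0 := by positivity
    have hm2 : ((m : ℝ) + 2) ≠ 0 := by positivity
    simp only [Nat.add_sub_cancel]
    rw [show m + 1 + 1 = m + 2 from rfl, ha (m + 2), ha (m + 1), ha m, hfac2, hfac1, hrec]
    push_cast
    field_simp
    ring
end

section
/- Let ρ > 1 be real. Define H(z) = (1−z)^{−ρ/(ρ−1)} (1 − z/ρ)^{1/(ρ−1)} for real z with |z| < 1 (both bases are then positive), and let q_n = (d^n/dz^n H)(0)/n! denote its Taylor coefficients at 0. Then ρ q₁ = (ρ+1) q₀ and, for every integer n ≥ 1, ρ(n+1) q_{n+1} − (ρ+1)(n+1) q_n + n q_{n−1} = 0; equivalently the sequence q_n satisfies the limiting recurrence ρ(q_{n+1} − q_n) + (n/(n+1)) q_{n−1} − q_n = 0. -/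
open Set

/-- For `ρ > 1`, the generating function `H(z) = (1−z)^{−ρ/(ρ−1)} (1 − z/ρ)^{1/(ρ−1)}`. -/
noncomputable def genH (ρ : ℝ) (z : ℝ) : ℝ :=
  (1 - z) ^ (-ρ / (ρ - 1)) * (1 - z / ρ) ^ (1 / (ρ - 1))

lemma genH_contDiffOn {ρ : ℝ} (hρ : 1 < ρ) :
    ContDiffOn ℝ ((⊤:ℕ∞) : WithTop ℕ∞) (genH ρ) (Ioo (-1:ℝ) 1) := by
  intro z hz
  have h1z : (0:ℝ) < 1 - z := by linarith [hz.2]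
  have h2z : (0:ℝ) < 1 - z / ρ := by
    have : z / ρ < 1 := by
      rw [div_lt_one (by linarith)]; linarith [hz.2]
    linarith
  have c1 : ContDiffAt ℝ ((⊤:ℕ∞) : WithTop ℕ∞) (fun z : ℝ => (1 - z) ^ (-ρ / (ρ - 1))) z :=
    (contDiffAt_const.sub contDiffAt_id).rpow_const_of_ne h1z.ne'
  have c2 : ContDiffAt ℝ ((⊤:ℕ∞) : WithTop ℕ∞) (fun z : ℝ => (1 - z / ρ) ^ (1 / (ρ - 1))) z :=
    (contDiffAt_const.sub (contDiffAt_id.div_const ρ)).rpow_const_of_ne h2z.ne'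
  exact (c1.mul c2).contDiffWithinAt

lemma genH_iter_contDiffOn {ρ : ℝ} (hρ : 1 < ρ) (n : ℕ) :
    ContDiffOn ℝ ((⊤:ℕ∞) : WithTop ℕ∞) (iteratedDeriv n (genH ρ)) (Ioo (-1:ℝ) 1) := by
  induction n with
  | zero => exact genH_contDiffOn hρ
  | succ n ih =>
    rw [iteratedDeriv_succ]
    exact ih.deriv_of_isOpen isOpen_Ioo (by exact_mod_cast le_top)

lemma genH_hasDerivAt_iter {ρ : ℝ} (hρ : 1 < ρ) (n : ℕ) {z : ℝ} (hz : z ∈ Ioo (-1:ℝ) 1) :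
    HasDerivAt (iteratedDeriv n (genH ρ)) (iteratedDeriv (n + 1) (genH ρ) z) z := by
  rw [iteratedDeriv_succ]
  have hd : DifferentiableAt ℝ (iteratedDeriv n (genH ρ)) z := by
    have := ((genH_iter_contDiffOn hρ n).differentiableOn
      (by simp)) z hz
    exact this.differentiableAt (isOpen_Ioo.mem_nhds hz)
  exact hd.hasDerivAt

/-- The key pointwise identity: the `n`-times differentiated ODE. -/
lemma genH_ode {ρ : ℝ} (hρ : 1 < ρ) (n : ℕ) {z : ℝ} (hz : z ∈ Ioo (-1:ℝ) 1) :
    (ρ - (ρ+1)*z + z^2) * iteratedDeriv (n+1) (genH ρ) z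
      + ((n:ℝ)*(2*z - (ρ+1)) + (z - (ρ+1))) * iteratedDeriv n (genH ρ) z
      + (n:ℝ)^2 * iteratedDeriv (n-1) (genH ρ) z = 0 := by
  induction n generalizing z with
  | zero =>
    simp only [Nat.cast_zero, zero_mul, zero_add, ne_eq, OfNat.ofNat_ne_zero,
      not_false_eq_true, zero_pow, Nat.zero_sub, add_zero]
    have hρ0 : (0:ℝ) < ρ := by linarith
    have h1z : (0:ℝ) < 1 - z := by linarith [hz.2]
    have h2z : (0:ℝ) < 1 - z / ρ := by
      have : z / ρ < 1 := by rw [div_lt_one hρ0]; linarith [hz.2]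
      linarith
    have hf : HasDerivAt (fun z : ℝ => (1 - z) ^ (-ρ / (ρ - 1)))
        (-1 * (-ρ / (ρ - 1)) * (1 - z) ^ (-ρ / (ρ - 1) - 1)) z :=
      ((hasDerivAt_id z).const_sub 1).rpow_const (Or.inl h1z.ne')
    have hg : HasDerivAt (fun z : ℝ => (1 - z / ρ) ^ (1 / (ρ - 1)))
        (-(1 / ρ) * (1 / (ρ - 1)) * (1 - z / ρ) ^ (1 / (ρ - 1) - 1)) z := by
      have : HasDerivAt (fun z : ℝ => 1 - z / ρ) (-(1 / ρ)) z := by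
        simpa using ((hasDerivAt_id z).div_const ρ).const_sub 1
      exact this.rpow_const (Or.inl h2z.ne')
    have hH : HasDerivAt (genH ρ)
        (-1 * (-ρ / (ρ - 1)) * (1 - z) ^ (-ρ / (ρ - 1) - 1) * ((1 - z / ρ) ^ (1 / (ρ - 1)))
          + (1 - z) ^ (-ρ / (ρ - 1)) * (-(1 / ρ) * (1 / (ρ - 1)) * (1 - z / ρ) ^ (1 / (ρ - 1) - 1))) z :=
      hf.mul hg
    rw [iteratedDeriv_one, iteratedDeriv_zero, hH.deriv]
    have ha1 : (1 - z) ^ (-ρ / (ρ - 1) - 1) = (1 - z) ^ (-ρ / (ρ - 1)) / (1 - z) := by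
      rw [Real.rpow_sub h1z, Real.rpow_one]
    have hρz : ρ - z ≠ 0 := by have := hz.2; intro h; nlinarith
    have hb1 : (1 - z / ρ) ^ (1 / (ρ - 1) - 1) = (1 - z / ρ) ^ (1 / (ρ - 1)) * ρ / (ρ - z) := by
      rw [Real.rpow_sub h2z, Real.rpow_one]
      rw [show 1 - z / ρ = (ρ - z) / ρ by field_simp, div_div_eq_mul_div]
    rw [ha1, hb1]
    unfold genH
    have hρ1 : ρ - 1 ≠ 0 := by linarith
    set u := (1 - z) ^ (-ρ / (ρ - 1)) with hu
    set v := (1 - z / ρ) ^ (1 / (ρ - 1)) with hv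
    field_simp
    ring
  | succ n ih =>
    -- differentiate the identity for n
    have hP : HasDerivAt (fun z : ℝ => ρ - (ρ+1)*z + z^2) (2*z - (ρ+1)) z := by
      have h1 : HasDerivAt (fun z : ℝ => ρ - (ρ+1)*z) (-(ρ+1)) z := by
        simpa using ((hasDerivAt_id z).const_mul (ρ+1)).const_sub ρ
      have h2 : HasDerivAt (fun z : ℝ => z^2) (2*z) z := by
        simpa using hasDerivAt_pow 2 z
      exact (h1.add h2).congr_deriv (by ring)
    have hC : HasDerivAt (fun z : ℝ => (n:ℝ)*(2*z - (ρ+1)) + (z - (ρ+1))) ((n:ℝ)*2 + 1) z := by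
      have h1 : HasDerivAt (fun z : ℝ => 2*z - (ρ+1)) 2 z := by
        simpa using ((hasDerivAt_id z).const_mul 2).sub_const (ρ+1)
      have h2 : HasDerivAt (fun z : ℝ => z - (ρ+1)) 1 z := (hasDerivAt_id z).sub_const (ρ+1)
      exact (h1.const_mul (n:ℝ)).add h2
    have h1 := genH_hasDerivAt_iter hρ (n+1) hz
    have h2 := genH_hasDerivAt_iter hρ n hz
    have h3 : HasDerivAt (fun z => (n:ℝ)^2 * iteratedDeriv (n-1) (genH ρ) z)
        ((n:ℝ)^2 * iteratedDeriv n (genH ρ) z) z := by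
      cases n with
      | zero => simpa using (hasDerivAt_const z (0:ℝ))
      | succ m =>
        simpa [Nat.add_sub_cancel] using
          (genH_hasDerivAt_iter hρ m hz).const_mul ((((m:ℝ)+1))^2)
    have hF : HasDerivAt (fun z : ℝ =>
        (ρ - (ρ+1)*z + z^2) * iteratedDeriv (n+1) (genH ρ) z
          + ((n:ℝ)*(2*z - (ρ+1)) + (z - (ρ+1))) * iteratedDeriv n (genH ρ) z
          + (n:ℝ)^2 * iteratedDeriv (n-1) (genH ρ) z)
        (((2*z - (ρ+1)) * iteratedDeriv (n+1) (genH ρ) z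
          + (ρ - (ρ+1)*z + z^2) * iteratedDeriv (n+1+1) (genH ρ) z)
          + (((n:ℝ)*2 + 1) * iteratedDeriv n (genH ρ) z
            + ((n:ℝ)*(2*z - (ρ+1)) + (z - (ρ+1))) * iteratedDeriv (n+1) (genH ρ) z)
          + (n:ℝ)^2 * iteratedDeriv n (genH ρ) z) z := by
      have g1 := hP.mul (genH_hasDerivAt_iter hρ (n+1) hz)
      have g2 := hC.mul (genH_hasDerivAt_iter hρ n hz)
      exact (g1.add g2).add h3
    have hzero : HasDerivAt (fun z : ℝ =>
        (ρ - (ρ+1)*z + z^2) * iteratedDeriv (n+1) (genH ρ) z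
          + ((n:ℝ)*(2*z - (ρ+1)) + (z - (ρ+1))) * iteratedDeriv n (genH ρ) z
          + (n:ℝ)^2 * iteratedDeriv (n-1) (genH ρ) z) 0 z := by
      apply (hasDerivAt_const z (0:ℝ)).congr_of_eventuallyEq
      filter_upwards [isOpen_Ioo.mem_nhds hz] with y hy
      exact ih hy
    have hE := hF.unique hzero
    simp only [Nat.add_sub_cancel]
    push_cast
    push_cast at hE
    linear_combination hE

/-- The Taylor coefficients `q_n = H^{(n)}(0)/n!` of
`H(z) = (1−z)^{−ρ/(ρ−1)} (1 − z/ρ)^{1/(ρ−1)}` (with `ρ > 1`) satisfy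
`ρ q₁ = (ρ+1) q₀` and `ρ(n+1) q_{n+1} − (ρ+1)(n+1) q_n + n q_{n−1} = 0` for `n ≥ 1`;
i.e. they solve the limiting recurrence `ρ(q_{n+1} − q_n) + (n/(n+1)) q_{n−1} − q_n = 0`. -/
theorem stmt18 (ρ : ℝ) (hρ : 1 < ρ) (q : ℕ → ℝ)
    (hq : ∀ n : ℕ, q n = iteratedDeriv n (genH ρ) 0 / (n.factorial : ℝ)) :
    ρ * q 1 = (ρ + 1) * q 0 ∧
    ∀ n : ℕ, 1 ≤ n →
      ρ * ((n : ℝ) + 1) * q (n + 1) - (ρ + 1) * ((n : ℝ) + 1) * q n + (n : ℝ) * q (n - 1) = 0 := by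
  have h0 : (0:ℝ) ∈ Ioo (-1:ℝ) 1 := by norm_num
  have hD : ∀ k : ℕ, iteratedDeriv k (genH ρ) 0 = (k.factorial : ℝ) * q k := by
    intro k
    rw [hq k]
    field_simp
  constructor
  · have key := genH_ode hρ 0 h0
    rw [hD 0, hD 1] at key
    norm_num at key
    linear_combination key
  · intro n hn
    obtain ⟨m, rfl⟩ : ∃ m, n = m + 1 := ⟨n - 1, (Nat.succ_pred_eq_of_pos hn).symm⟩
    have key := genH_ode hρ (m+1) h0
    simp only [Nat.add_sub_cancel] at key
    rw [hD m, hD (m+1), hD (m+1+1)] at key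
    have f1 : ((m+1+1).factorial : ℝ) = ((m:ℝ)+2) * (((m:ℝ)+1) * (m.factorial : ℝ)) := by
      rw [Nat.factorial_succ, Nat.factorial_succ]; push_cast; ring
    have f2 : ((m+1).factorial : ℝ) = ((m:ℝ)+1) * (m.factorial : ℝ) := by
      rw [Nat.factorial_succ]; push_cast; ring
    rw [f1, f2] at key
    have hfm : (m.factorial : ℝ) ≠ 0 := Nat.cast_ne_zero.mpr m.factorial_ne_zero
    have h2 : ((m:ℝ)+1) ≠ 0 := by positivity
    simp only [Nat.add_sub_cancel]
    refine mul_left_cancel₀ (mul_ne_zero h2 hfm) ?_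
    rw [mul_zero]
    push_cast
    push_cast at key
    linear_combination key
end
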